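/- Isoperimetric duality: Let (V, ‖·‖_V) and (W, ‖·‖_W) be normed real vector spaces and φ : V → W a (not necessarily continuous) linear map. Let Ω ⊆ W* be the set of linear functionals ω : W → ℝ such that both ω and φ*ω := ω ∘ φ are bounded, and let φ* : Ω → V* be the adjoint ω ↦ ω ∘ φ. Define C₁ to be the least constant such that for every ε > 0, every w in the image of φ has a preimage v with ‖v‖_V ≤ C₁‖w‖_W + ε, and define C₂ to be the least constant such that for every ε > 0, every ν in the image of φ* has a preimage ω ∈ Ω with ‖ω‖_{W*} ≤ C₂‖ν‖_{V*} + ε. If C₁ and C₂ are both finite, then C₁ = C₂. -/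

import Mathlib

/-!
Isoperimetric duality (Theorem "IPD" of the paper).

`opNormFn f` is the operator norm of a (not necessarily continuous) linear functional `f`,
defined as the infimum of the constants `M ≥ 0` with `|f x| ≤ M * ‖x‖` for all `x`
(a linear functional is *bounded* when such an `M` exists).
-/

/-- A linear functional is bounded if `|f x| ≤ M ‖x‖` for some constant `M`. -/
def IsBddFunctional {E : Type*} [NormedAddCommGroup E] [NormedSpace ℝ E]
    (f : E →ₗ[ℝ] ℝ) : Prop :=
  ∃ M : ℝ, ∀ x, |f x| ≤ M * ‖x‖

/-- The operator norm of a (not necessarily continuous) linear functional. -/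
noncomputable def opNormFn {E : Type*} [NormedAddCommGroup E] [NormedSpace ℝ E]
    (f : E →ₗ[ℝ] ℝ) : ℝ :=
  sInf {M : ℝ | 0 ≤ M ∧ ∀ x, |f x| ≤ M * ‖x‖}

section helpers

variable {E : Type*} [NormedAddCommGroup E] [NormedSpace ℝ E]

lemma opNormFn_nonneg (f : E →ₗ[ℝ] ℝ) : 0 ≤ opNormFn f :=
  Real.sInf_nonneg fun _ h => h.1

lemma abs_le_opNormFn {f : E →ₗ[ℝ] ℝ} (hf : IsBddFunctional f) (x : E) :
    |f x| ≤ opNormFn f * ‖x‖ := by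
  obtain ⟨M, hM⟩ := hf
  have hne : {M : ℝ | 0 ≤ M ∧ ∀ x, |f x| ≤ M * ‖x‖}.Nonempty := by
    refine ⟨max M 0, le_max_right _ _, fun y => (hM y).trans ?_⟩
    exact mul_le_mul_of_nonneg_right (le_max_left _ _) (norm_nonneg _)
  rcases eq_or_ne x 0 with rfl | hx
  · simp
  have hxpos : 0 < ‖x‖ := norm_pos_iff.mpr hx
  rw [← div_le_iff₀ hxpos]
  exact le_csInf hne fun M' hM' => (div_le_iff₀ hxpos).mpr (hM'.2 x)

lemma opNormFn_le {f : E →ₗ[ℝ] ℝ} {M : ℝ} (h0 : 0 ≤ M) (h : ∀ x, |f x| ≤ M * ‖x‖) :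
    opNormFn f ≤ M :=
  csInf_le ⟨0, fun _ h => h.1⟩ ⟨h0, h⟩

end helpers

set_option maxHeartbeats 2000000

/-- **Isoperimetric duality.**  Let `φ : V → W` be a linear map between normed real vector
spaces, let `Ω` be the set of linear functionals `ω : W → ℝ` such that both `ω` and
`ω ∘ φ` are bounded, and let `φ* : Ω → V*` be `ω ↦ ω ∘ φ`.  If `C₁` is the least constant
such that for every `ε > 0` every `w` in the image of `φ` has a preimage `v` with
`‖v‖ ≤ C₁ ‖w‖ + ε`, and `C₂` is the least constant such that for every `ε > 0` every
`ν` in the image of `φ*` has a preimage `ω ∈ Ω` with `‖ω‖ ≤ C₂ ‖ν‖ + ε` (in particular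
both constants exist, i.e. are finite), then `C₁ = C₂`. -/
theorem isoperimetric_duality
    {V W : Type*} [NormedAddCommGroup V] [NormedSpace ℝ V]
    [NormedAddCommGroup W] [NormedSpace ℝ W]
    (φ : V →ₗ[ℝ] W)
    (Ω : Set (W →ₗ[ℝ] ℝ))
    (hΩ : Ω = {ω | IsBddFunctional ω ∧ IsBddFunctional (ω ∘ₗ φ)})
    (C₁ C₂ : ℝ)
    (h₁ : IsLeast {C : ℝ |
      ∀ ε > 0, ∀ w : W, (∃ v, φ v = w) →
        ∃ v, φ v = w ∧ ‖v‖ ≤ C * ‖w‖ + ε} C₁)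
    (h₂ : IsLeast {C : ℝ |
      ∀ ε > 0, ∀ ν : V →ₗ[ℝ] ℝ, (∃ ω ∈ Ω, ω ∘ₗ φ = ν) →
        ∃ ω ∈ Ω, ω ∘ₗ φ = ν ∧ opNormFn ω ≤ C * opNormFn ν + ε} C₂) :
    C₁ = C₂ := by
  obtain ⟨hm₁, hl₁⟩ := h₁
  obtain ⟨hm₂, hl₂⟩ := h₂
  have h0Ω : (0 : W →ₗ[ℝ] ℝ) ∈ Ω := by
    rw [hΩ]
    exact ⟨⟨0, by simp⟩, ⟨0, by simp⟩⟩
  -- C₁ is nonnegative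
  have hC₁ : 0 ≤ C₁ := by
    by_contra h
    push_neg at h
    have hmem : C₁ - 1 ∈ {C : ℝ |
        ∀ ε > 0, ∀ w : W, (∃ v, φ v = w) →
          ∃ v, φ v = w ∧ ‖v‖ ≤ C * ‖w‖ + ε} := by
      intro ε hε w hw
      have hw0 : w = 0 := by
        by_contra hw0
        have hwpos : 0 < ‖w‖ := norm_pos_iff.mpr hw0
        have h2 : C₁ * ‖w‖ < 0 := mul_neg_of_neg_of_pos h hwpos
        obtain ⟨v, _, hvn⟩ := hm₁ (-(C₁ * ‖w‖) / 2) (by linarith) w hw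
        have := norm_nonneg v
        linarith
      subst hw0
      exact ⟨0, map_zero φ, by simpa using hε.le⟩
    linarith [hl₁ hmem]
  -- C₂ is nonnegative
  have hC₂ : 0 ≤ C₂ := by
    by_contra h
    push_neg at h
    have key : ∀ ν : V →ₗ[ℝ] ℝ, (∃ ω ∈ Ω, ω ∘ₗ φ = ν) → ν = 0 := by
      intro ν hν
      have hbdd : IsBddFunctional ν := by
        obtain ⟨ω, hωΩ, hωφ⟩ := hν
        rw [hΩ] at hωΩ
        exact hωφ ▸ hωΩ.2
      have hν0 : opNormFn ν ≤ 0 := by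
        by_contra h'
        push_neg at h'
        obtain ⟨ω, _, _, hωn⟩ := hm₂ (-(C₂ * opNormFn ν) / 2) (by nlinarith) ν hν
        have := opNormFn_nonneg ω
        nlinarith
      have hν0' : opNormFn ν = 0 := le_antisymm hν0 (opNormFn_nonneg ν)
      ext x
      have := abs_le_opNormFn hbdd x
      rw [hν0', zero_mul] at this
      simpa using le_antisymm this (abs_nonneg _)
    have hmem : C₂ - 1 ∈ {C : ℝ |
        ∀ ε > 0, ∀ ν : V →ₗ[ℝ] ℝ, (∃ ω ∈ Ω, ω ∘ₗ φ = ν) →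
          ∃ ω ∈ Ω, ω ∘ₗ φ = ν ∧ opNormFn ω ≤ C * opNormFn ν + ε} := by
      intro ε hε ν hν
      have := key ν hν
      subst this
      refine ⟨0, h0Ω, by ext v; simp, ?_⟩
      have h00 : opNormFn (0 : W →ₗ[ℝ] ℝ) ≤ 0 := opNormFn_le le_rfl (by simp)
      have h01 : opNormFn (0 : V →ₗ[ℝ] ℝ) = 0 :=
        le_antisymm (opNormFn_le le_rfl (by simp)) (opNormFn_nonneg _)
      rw [h01, mul_zero, zero_add]
      linarith
    linarith [hl₂ hmem]
  -- Direction A : C₂ ≤ C₁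
  have hA : C₂ ≤ C₁ := by
    apply hl₂
    intro ε hε ν hν
    obtain ⟨ω₀, hω₀Ω, hω₀⟩ := hν
    rw [hΩ] at hω₀Ω
    have hνbdd : IsBddFunctional ν := hω₀ ▸ hω₀Ω.2
    have hker : LinearMap.ker φ ≤ LinearMap.ker ν := by
      intro v hv
      rw [LinearMap.mem_ker] at hv ⊢
      rw [← hω₀]
      simp [LinearMap.comp_apply, hv]
    set g : LinearMap.range φ →ₗ[ℝ] ℝ :=
      ((LinearMap.ker φ).liftQ ν hker) ∘ₗ (φ.quotKerEquivRange.symm : _ →ₗ[ℝ] _) with hg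
    have hgval : ∀ (v : V) (h : φ v ∈ LinearMap.range φ), g ⟨φ v, h⟩ = ν v := by
      intro v h
      have h1 : φ.quotKerEquivRange.symm ⟨φ v, h⟩ = (LinearMap.ker φ).mkQ v :=
        φ.quotKerEquivRange_symm_apply_image v h
      simp [hg, LinearMap.comp_apply, h1, Submodule.mkQ_apply, Submodule.liftQ_apply]
    have hCN : 0 ≤ C₁ * opNormFn ν := mul_nonneg hC₁ (opNormFn_nonneg ν)
    have hgbd : ∀ x : LinearMap.range φ, |g x| ≤ C₁ * opNormFn ν * ‖(x : W)‖ := by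
      intro x
      have key : ∀ δ > (0 : ℝ),
          |g x| ≤ C₁ * opNormFn ν * ‖(x : W)‖ + opNormFn ν * δ := by
        intro δ hδ
        obtain ⟨v, hv, hvn⟩ := hm₁ δ hδ (x : W) x.2
        have hgx : g x = ν v := by
          rw [← hgval v ⟨v, rfl⟩]
          congr 1
          exact Subtype.ext hv.symm
        rw [hgx]
        calc |ν v| ≤ opNormFn ν * ‖v‖ := abs_le_opNormFn hνbdd v
          _ ≤ opNormFn ν * (C₁ * ‖(x : W)‖ + δ) :=
              mul_le_mul_of_nonneg_left hvn (opNormFn_nonneg ν)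
          _ = C₁ * opNormFn ν * ‖(x : W)‖ + opNormFn ν * δ := by ring
      by_contra hcon
      push_neg at hcon
      have hBnn : 0 ≤ opNormFn ν := opNormFn_nonneg ν
      set t := (|g x| - C₁ * opNormFn ν * ‖(x : W)‖) / (2 * (opNormFn ν + 1)) with ht
      have htpos : 0 < t := div_pos (by linarith) (by linarith)
      have h1 := key t htpos
      have h2 : (opNormFn ν + 1) * t = (|g x| - C₁ * opNormFn ν * ‖(x : W)‖) / 2 := by
        rw [ht]
        field_simp
      nlinarith
    obtain ⟨ω, hωg, hωle⟩ := exists_extension_of_le_sublinear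
      ⟨LinearMap.range φ, g⟩ (fun u => C₁ * opNormFn ν * ‖u‖)
      (fun c hc x => by
        show C₁ * opNormFn ν * ‖c • x‖ = c * (C₁ * opNormFn ν * ‖x‖)
        rw [norm_smul, Real.norm_of_nonneg hc.le]; ring)
      (fun x y => by
        show C₁ * opNormFn ν * ‖x + y‖ ≤ C₁ * opNormFn ν * ‖x‖ + C₁ * opNormFn ν * ‖y‖
        calc C₁ * opNormFn ν * ‖x + y‖ ≤ C₁ * opNormFn ν * (‖x‖ + ‖y‖) :=
              mul_le_mul_of_nonneg_left (norm_add_le x y) hCN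
          _ = C₁ * opNormFn ν * ‖x‖ + C₁ * opNormFn ν * ‖y‖ := mul_add _ _ _)
      (fun x => (le_abs_self _).trans (hgbd x))
    have hωabs : ∀ u, |ω u| ≤ C₁ * opNormFn ν * ‖u‖ := by
      intro u
      rw [abs_le]
      constructor
      · have h1 := hωle (-u)
        rw [map_neg, norm_neg] at h1
        linarith
      · exact hωle u
    have hωφ : ω ∘ₗ φ = ν := by
      ext v
      have h1 := hωg ⟨φ v, ⟨v, rfl⟩⟩
      have h2 := hgval v ⟨v, rfl⟩
      show ω (φ v) = ν v
      exact h1.trans h2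
    refine ⟨ω, ?_, hωφ, ?_⟩
    · rw [hΩ]
      exact ⟨⟨_, hωabs⟩, hωφ ▸ hνbdd⟩
    · exact (opNormFn_le hCN hωabs).trans (by linarith)
  -- Direction B : C₁ ≤ C₂
  have hB : C₁ ≤ C₂ := by
    apply hl₁
    intro ε hε w hw
    obtain ⟨v₀, hv₀⟩ := hw
    set S : Set ℝ := {r | ∃ v, φ v = w ∧ r = ‖v‖} with hS
    have hSne : S.Nonempty := ⟨‖v₀‖, v₀, hv₀, rfl⟩
    have hSbd : BddBelow S := ⟨0, by rintro r ⟨v, -, rfl⟩; exact norm_nonneg v⟩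
    set d := sInf S with hd
    have key : d ≤ C₂ * ‖w‖ := by
      by_contra hcon
      push_neg at hcon
      have hw0 : w ≠ 0 := by
        rintro rfl
        have hd0 : d ≤ 0 := csInf_le hSbd ⟨0, map_zero φ, norm_zero.symm⟩
        rw [norm_zero, mul_zero] at hcon
        linarith
      have hwpos : 0 < ‖w‖ := norm_pos_iff.mpr hw0
      set δ := (d - C₂ * ‖w‖) / 2 with hδdef
      have hδ : 0 < δ := by rw [hδdef]; linarith
      set s := δ / (2 * (C₁ + 1)) with hsdef
      have hC₁1 : (0 : ℝ) < C₁ + 1 := by linarith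
      have hs : 0 < s := by rw [hsdef]; positivity
      -- Step 1: `w` has W-distance at least `s` from `φ` of the ball of radius `d - δ`.
      have step1 : ∀ v : V, ‖v‖ ≤ d - δ → s ≤ ‖w - φ v‖ := by
        intro v hv
        by_contra hlt
        push_neg at hlt
        obtain ⟨u, hu, hun⟩ := hm₁ (δ / 4) (by linarith) (w - φ v)
          ⟨v₀ - v, by rw [map_sub, hv₀]⟩
        have hdle : d ≤ ‖v + u‖ := csInf_le hSbd
          ⟨v + u, by rw [map_add, hu]; abel, rfl⟩
        have h1 : ‖v + u‖ ≤ ‖v‖ + ‖u‖ := norm_add_le _ _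
        have h2 : C₁ * ‖w - φ v‖ ≤ C₁ * s := mul_le_mul_of_nonneg_left hlt.le hC₁
        have h3 : C₁ * s ≤ (C₁ + 1) * s := by nlinarith
        have h4 : (C₁ + 1) * s = δ / 2 := by
          rw [hsdef]
          field_simp
        linarith
      set K := (d + 1) / s with hK
      have hd0 : 0 ≤ d := le_csInf hSne (by rintro r ⟨v, -, rfl⟩; exact norm_nonneg v)
      have hKpos : 0 < K := div_pos (by linarith) hs
      -- The sublinear functional `p`.
      set p : W → ℝ := fun u => sInf {r | ∃ v : V, r = ‖v‖ + K * ‖u - φ v‖} with hp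
      have pbd : ∀ u, BddBelow {r | ∃ v : V, r = ‖v‖ + K * ‖u - φ v‖} := by
        intro u
        refine ⟨0, ?_⟩
        rintro r ⟨v, rfl⟩
        positivity
      have pne : ∀ u : W, {r | ∃ v : V, r = ‖v‖ + K * ‖u - φ v‖}.Nonempty :=
        fun u => ⟨_, 0, rfl⟩
      have ple : ∀ (u : W) (v : V), p u ≤ ‖v‖ + K * ‖u - φ v‖ :=
        fun u v => csInf_le (pbd u) ⟨v, rfl⟩
      have pge : ∀ (u : W) (c : ℝ), (∀ v : V, c ≤ ‖v‖ + K * ‖u - φ v‖) → c ≤ p u := by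
        intro u c h
        exact le_csInf (pne u) (by rintro r ⟨v, rfl⟩; exact h v)
      have p0 : ∀ u, 0 ≤ p u := fun u => pge u 0 fun v => by positivity
      have pK : ∀ u, p u ≤ K * ‖u‖ := by
        intro u
        have := ple u 0
        simpa using this
      have padd : ∀ u u', p (u + u') ≤ p u + p u' := by
        intro u u'
        have h1 : ∀ v : V, p (u + u') - (‖v‖ + K * ‖u - φ v‖) ≤ p u' := by
          intro v
          apply pge u'
          intro v'
          have h2 := ple (u + u') (v + v')
          have htri : ‖v + v'‖ ≤ ‖v‖ + ‖v'‖ := norm_add_le _ _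
          have htri2 : ‖u + u' - φ (v + v')‖ ≤ ‖u - φ v‖ + ‖u' - φ v'‖ := by
            have heq : u + u' - φ (v + v') = (u - φ v) + (u' - φ v') := by
              rw [map_add]; abel
            rw [heq]; exact norm_add_le _ _
          have h3 : K * ‖u + u' - φ (v + v')‖ ≤ K * ‖u - φ v‖ + K * ‖u' - φ v'‖ :=
            calc K * ‖u + u' - φ (v + v')‖
                ≤ K * (‖u - φ v‖ + ‖u' - φ v'‖) :=
                  mul_le_mul_of_nonneg_left htri2 hKpos.le
              _ = K * ‖u - φ v‖ + K * ‖u' - φ v'‖ := mul_add _ _ _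
          linarith
        have h2 : p (u + u') - p u' ≤ p u := pge u _ (fun v => by linarith [h1 v])
        linarith
      have phom_le : ∀ c : ℝ, 0 < c → ∀ u, p (c • u) ≤ c * p u := by
        intro c hc u
        have h1 : ∀ v : V, p (c • u) ≤ c * (‖v‖ + K * ‖u - φ v‖) := by
          intro v
          have h2 := ple (c • u) (c • v)
          have e1 : ‖c • v‖ = c * ‖v‖ := by
            rw [norm_smul, Real.norm_of_nonneg hc.le]
          have e2 : ‖c • u - φ (c • v)‖ = c * ‖u - φ v‖ := by
            rw [map_smul, ← smul_sub, norm_smul, Real.norm_of_nonneg hc.le]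
          rw [e1, e2] at h2
          nlinarith
        have h3 : p (c • u) / c ≤ p u := by
          apply pge u
          intro v
          rw [div_le_iff₀ hc]
          nlinarith [h1 v]
        calc p (c • u) = c * (p (c • u) / c) := by field_simp
          _ ≤ c * p u := mul_le_mul_of_nonneg_left h3 hc.le
      have phom : ∀ c : ℝ, 0 < c → ∀ u, p (c • u) = c * p u := by
        intro c hc u
        refine le_antisymm (phom_le c hc u) ?_
        have h1 := phom_le c⁻¹ (inv_pos.mpr hc) (c • u)
        rw [smul_smul, inv_mul_cancel₀ hc.ne', one_smul] at h1
        calc c * p u ≤ c * (c⁻¹ * p (c • u)) := mul_le_mul_of_nonneg_left h1 hc.le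
          _ = p (c • u) := by field_simp
      have ppw : d - δ ≤ p w := by
        apply pge w
        intro v
        by_cases hv : d - δ ≤ ‖v‖
        · nlinarith [mul_nonneg hKpos.le (norm_nonneg (w - φ v))]
        · push_neg at hv
          have h1 := step1 v hv.le
          have h2 : K * s ≤ K * ‖w - φ v‖ := mul_le_mul_of_nonneg_left h1 hKpos.le
          have h3 : K * s = d + 1 := by
            rw [hK]
            field_simp
          nlinarith [norm_nonneg v]
      have ppφ : ∀ v : V, p (φ v) ≤ ‖v‖ := by
        intro v
        have := ple (φ v) v
        simpa using this
      -- Hahn–Banach extension of `t • w ↦ t * p w` dominated by `p`.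
      have hpw0 : p 0 = 0 := le_antisymm (by simpa using pK 0) (p0 0)
      have hpnegw : 0 ≤ p w + p (-w) := by
        have := padd w (-w)
        rw [add_neg_cancel, hpw0] at this
        linarith
      have hdom : ∀ x : (LinearPMap.mkSpanSingleton (K := ℝ) (σ := RingHom.id ℝ) w (p w) hw0).domain,
          (LinearPMap.mkSpanSingleton (K := ℝ) (σ := RingHom.id ℝ) w (p w) hw0) x ≤ p x := by
        intro x
        rcases Submodule.mem_span_singleton.mp x.2 with ⟨t, ht⟩
        have hx : x = ⟨t • w, by rw [ht]; exact x.2⟩ := Subtype.ext ht.symm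
        rw [hx, LinearPMap.mkSpanSingleton'_apply]
        show t • p w ≤ p (t • w)
        rw [smul_eq_mul]
        rcases lt_trichotomy t 0 with h | h | h
        · have h1 : p (t • w) = (-t) * p (-w) := by
            rw [show t • w = (-t) • (-w) by simp, phom (-t) (by linarith) (-w)]
          nlinarith
        · subst h
          rw [zero_smul, hpw0, zero_mul]
        · rw [phom t h w]
      obtain ⟨ω, hωg, hωle⟩ := exists_extension_of_le_sublinear
        (LinearPMap.mkSpanSingleton (K := ℝ) (σ := RingHom.id ℝ) w (p w) hw0) p
        (fun c hc u => phom c hc u) padd hdom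
      have hωw : ω w = p w := by
        have h1 := hωg ⟨w, Submodule.mem_span_singleton_self w⟩
        have h2 := LinearPMap.mkSpanSingleton_apply ℝ ℝ (σ := RingHom.id ℝ) hw0 (p w)
        exact h1.trans h2
      have hωbdd : ∀ u, |ω u| ≤ K * ‖u‖ := by
        intro u
        rw [abs_le]
        constructor
        · have h1 := hωle (-u)
          rw [map_neg] at h1
          have h2 := pK (-u)
          rw [norm_neg] at h2
          linarith
        · exact (hωle u).trans (pK u)
      have hωφbdd : ∀ v : V, |ω (φ v)| ≤ 1 * ‖v‖ := by
        intro v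
        rw [abs_le, one_mul]
        constructor
        · have h1 : -(ω (φ v)) ≤ p (-(φ v)) := by simpa using hωle (φ (-v))
          have h2 : p (-(φ v)) ≤ ‖v‖ := by simpa using ppφ (-v)
          linarith
        · exact (hωle (φ v)).trans (ppφ v)
      have hωΩ : ω ∈ Ω := by
        rw [hΩ]
        exact ⟨⟨K, hωbdd⟩, ⟨1, fun v => hωφbdd v⟩⟩
      set ν := ω ∘ₗ φ with hν
      have hνnorm : opNormFn ν ≤ 1 := opNormFn_le zero_le_one fun v => hωφbdd v
      obtain ⟨ω', hω'Ω, hω'φ, hω'n⟩ := hm₂ (δ / (2 * ‖w‖)) (by positivity) ν ⟨ω, hωΩ, rfl⟩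
      have hω'bdd : IsBddFunctional ω' := by rw [hΩ] at hω'Ω; exact hω'Ω.1
      have h5 : ω' w = ω w := by
        calc ω' w = ω' (φ v₀) := by rw [hv₀]
          _ = ν v₀ := by rw [← hω'φ]; rfl
          _ = ω (φ v₀) := rfl
          _ = ω w := by rw [hv₀]
      have h6 : ω w ≤ opNormFn ω' * ‖w‖ := by
        rw [← h5]
        exact (le_abs_self _).trans (abs_le_opNormFn hω'bdd w)
      have h7 : opNormFn ω' ≤ C₂ + δ / (2 * ‖w‖) := by
        have := mul_le_mul_of_nonneg_left hνnorm hC₂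
        rw [mul_one] at this
        linarith
      have h8 : (C₂ + δ / (2 * ‖w‖)) * ‖w‖ = C₂ * ‖w‖ + δ / 2 := by
        field_simp
      have h9 : opNormFn ω' * ‖w‖ ≤ (C₂ + δ / (2 * ‖w‖)) * ‖w‖ :=
        mul_le_mul_of_nonneg_right h7 (norm_nonneg w)
      have h10 : d - δ ≤ ω w := by rw [hωw]; exact ppw
      linarith
    obtain ⟨r, hrS, hrlt⟩ := exists_lt_of_csInf_lt hSne (show sInf S < d + ε by rw [← hd]; linarith)
    obtain ⟨v, hv, rfl⟩ := hrS
    exact ⟨v, hv, by linarith⟩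
  exact le_antisymm hB hA
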